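/- Let β_k = 2^k B_k / k! and β_{k,p} := (−1)^p (p−1)! Σ_{0 ≤ i ≤ ⌊(p−1)/2⌋} β_{k+p−2i}/(2i+1)!. Then for every integer m ≥ 1 one has β_{0, 2m} = β_{0, 2m+1} = 1/(2m+1). -/

import Mathlib

/-- `β_k = 2^k B_k / k!`, where `B_k` is the k-th Bernoulli number (with `B₁ = −1/2`). -/
noncomputable def smallBeta (k : ℕ) : ℚ := 2 ^ k * bernoulli k / (Nat.factorial k)

open PowerSeries Finset

noncomputable def betaF : ℚ⟦X⟧ := PowerSeries.mk fun n => smallBeta n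

lemma betaF_eq : betaF = rescale 2 (bernoulliPowerSeries ℚ) := by
  ext n
  simp [betaF, coeff_rescale, bernoulliPowerSeries, smallBeta, div_eq_mul_inv, mul_assoc]

lemma betaF_mul : betaF * ((exp ℚ) ^ 2 - 1) = 2 * X := by
  have h := congrArg (rescale (2 : ℚ)) (bernoulliPowerSeries_mul_exp_sub_one ℚ)
  rw [map_mul, map_sub, map_one, rescale_X] at h
  rw [betaF_eq, exp_pow_eq_rescale_exp]
  norm_num at h ⊢
  rw [h]
  simp [← map_ofNat (C (R := ℚ)) 2]

lemma main_identity :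
    (betaF + X) * (exp ℚ - evalNegHom (exp ℚ)) = X * (exp ℚ + evalNegHom (exp ℚ)) := by
  have hEE : exp ℚ * evalNegHom (exp ℚ) = 1 := exp_mul_exp_neg_eq_one (A := ℚ)
  have hG := betaF_mul
  linear_combination (evalNegHom (exp ℚ)) * hG - betaF * (exp ℚ) * hEE

lemma sum_range_two_mul' {M : Type*} [AddCommMonoid M] (f : ℕ → M) (n : ℕ) :
    ∑ i ∈ range (2 * n), f i = ∑ i ∈ range n, f (2 * i) + ∑ i ∈ range n, f (2 * i + 1) := by
  induction n with
  | zero => simp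
  | succ n ih =>
    have h : 2 * (n + 1) = 2 * n + 1 + 1 := by ring
    rw [h, sum_range_succ, sum_range_succ, ih, sum_range_succ, sum_range_succ]
    abel

lemma coeff_evalNegHom_exp (n : ℕ) :
    coeff (R := ℚ) n (evalNegHom (exp ℚ)) = (-1) ^ n / (Nat.factorial n) := by
  have : evalNegHom (exp ℚ) = rescale (-1 : ℚ) (exp ℚ) := rfl
  rw [this, coeff_rescale, coeff_exp]
  simp [div_eq_mul_inv]

lemma aux (m : ℕ) :
    ∑ i ∈ range (m + 1), smallBeta (2 * m - 2 * i) / (Nat.factorial (2 * i + 1))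
      = 1 / (Nat.factorial (2 * m)) := by
  have h := congrArg (coeff (R := ℚ) (2 * m + 1)) main_identity
  rw [coeff_succ_X_mul, map_add, coeff_exp, coeff_evalNegHom_exp, pow_mul] at h
  rw [coeff_mul, Finset.Nat.sum_antidiagonal_eq_sum_range_succ_mk] at h
  have h22 : (2 * m + 1).succ = 2 * (m + 1) := by omega
  rw [h22, sum_range_two_mul'] at h
  -- odd-index terms vanish
  have hodd : ∑ i ∈ range (m + 1),
      coeff (R := ℚ) (2 * i + 1) (betaF + X) * coeff (R := ℚ) (2 * m + 1 - (2 * i + 1)) (exp ℚ - evalNegHom (exp ℚ)) = 0 := by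
    refine Finset.sum_eq_zero fun i hi => ?_
    have hi' : i ≤ m := by simpa using Nat.lt_succ_iff.mp (mem_range.mp hi)
    have hj : 2 * m + 1 - (2 * i + 1) = 2 * (m - i) := by omega
    rw [hj, map_sub, coeff_exp, coeff_evalNegHom_exp, pow_mul]
    simp
  rw [hodd, add_zero] at h
  have heven : ∑ i ∈ range (m + 1),
      coeff (R := ℚ) (2 * i) (betaF + X) * coeff (R := ℚ) (2 * m + 1 - 2 * i) (exp ℚ - evalNegHom (exp ℚ))
      = ∑ i ∈ range (m + 1), smallBeta (2 * i) * (2 / (Nat.factorial (2 * (m - i) + 1))) := by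
    refine Finset.sum_congr rfl fun i hi => ?_
    have hi' : i ≤ m := Nat.lt_succ_iff.mp (mem_range.mp hi)
    have hj : 2 * m + 1 - 2 * i = 2 * (m - i) + 1 := by omega
    have hx : coeff (R := ℚ) (2 * i) (betaF + X) = smallBeta (2 * i) := by
      rw [map_add, coeff_X, if_neg (by omega)]
      simp [betaF]
    rw [hj, hx, map_sub, coeff_exp, coeff_evalNegHom_exp]
    have : ((-1 : ℚ)) ^ (2 * (m - i) + 1) = -1 := by
      rw [pow_succ, pow_mul]; norm_num
    rw [this]
    simp only [Algebra.algebraMap_self, RingHom.id_apply]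
    ring
  rw [heven] at h
  -- reflect the sum
  have hrefl := Finset.sum_range_reflect
    (fun i => smallBeta (2 * i) * (2 / (Nat.factorial (2 * (m - i) + 1)))) (m + 1)
  rw [← hrefl] at h
  have heq : ∑ j ∈ range (m + 1),
      smallBeta (2 * (m + 1 - 1 - j)) * (2 / (Nat.factorial (2 * (m - (m + 1 - 1 - j)) + 1)))
      = 2 * ∑ i ∈ range (m + 1), smallBeta (2 * m - 2 * i) / (Nat.factorial (2 * i + 1)) := by
    rw [Finset.mul_sum]
    refine Finset.sum_congr rfl fun j hj => ?_
    have hj' : j ≤ m := Nat.lt_succ_iff.mp (mem_range.mp hj)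
    have e1 : 2 * (m + 1 - 1 - j) = 2 * m - 2 * j := by omega
    have e2 : m - (m + 1 - 1 - j) = j := by omega
    rw [e1, e2]
    ring
  rw [heq] at h
  norm_num at h
  rw [one_div]
  linarith [h]

lemma smallBeta_zero : smallBeta 0 = 1 := by simp [smallBeta]

lemma smallBeta_one : smallBeta 1 = -1 := by
  simp [smallBeta, bernoulli_one]
  norm_num

lemma smallBeta_odd {n : ℕ} (h : Odd n) (h1 : 1 < n) : smallBeta n = 0 := by
  rw [smallBeta, bernoulli_eq_bernoulli'_of_ne_one (by omega),
    bernoulli'_eq_zero_of_odd h h1]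
  simp

/-- `β_{k,p} = (−1)^p (p−1)! Σ_{0 ≤ i ≤ ⌊(p−1)/2⌋} β_{k+p−2i}/(2i+1)!`. -/
noncomputable def betaKP (k p : ℕ) : ℚ :=
  (-1) ^ p * (Nat.factorial (p - 1)) *
    ∑ i ∈ Finset.range ((p - 1) / 2 + 1),
      smallBeta (k + p - 2 * i) / (Nat.factorial (2 * i + 1))

/-- `β_{0,2m} = β_{0,2m+1} = 1/(2m+1)` for every `m ≥ 1`. -/
theorem statement_10 (m : ℕ) (hm : 1 ≤ m) :
    betaKP 0 (2 * m) = 1 / (2 * (m : ℚ) + 1) ∧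
    betaKP 0 (2 * m + 1) = 1 / (2 * (m : ℚ) + 1) := by
  have hm' : (1:ℚ) ≤ (m:ℚ) := by exact_mod_cast hm
  have ha : (((2*m-1).factorial : ℚ)) ≠ 0 := by
    exact_mod_cast (2*m-1).factorial_ne_zero
  have hfs : ((2*m).factorial : ℚ) = (2*(m:ℚ)) * ((2*m-1).factorial) := by
    rw [show (2*m) = (2*m-1)+1 from by omega, Nat.factorial_succ]
    push_cast [show (2*m-1)+1 = 2*m from by omega]
    ring
  have hfs2 : ((2*m+1).factorial : ℚ) = (2*(m:ℚ)+1) * ((2*m).factorial) := by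
    rw [Nat.factorial_succ]
    push_cast
    ring
  constructor
  · rw [betaKP, show (2*m-1)/2 + 1 = m from by omega]
    have hs := aux m
    rw [Finset.sum_range_succ, show 2*m - 2*m = 0 from by omega, smallBeta_zero] at hs
    have hsum : ∑ i ∈ Finset.range m, smallBeta (0 + 2*m - 2*i) / (Nat.factorial (2*i+1))
        = 1 / ((2*m).factorial : ℚ) - 1 / ((2*m+1).factorial : ℚ) := by
      have : ∀ i, 0 + 2*m - 2*i = 2*m - 2*i := fun i => by omega
      simp only [this]
      rw [eq_sub_iff_add_eq, ← hs]
    rw [hsum, show ((-1:ℚ)) ^ (2*m) = 1 from by rw [pow_mul]; norm_num, hfs2, hfs]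
    have h2m : (2*(m:ℚ)) ≠ 0 := by positivity
    have h2m1 : (2*(m:ℚ)+1) ≠ 0 := by positivity
    field_simp
    ring
  · rw [betaKP, show (2*m+1-1)/2 + 1 = m+1 from by omega]
    have hsum : ∑ i ∈ Finset.range (m+1), smallBeta (0 + (2*m+1) - 2*i) / (Nat.factorial (2*i+1))
        = -1 / ((2*m+1).factorial : ℚ) := by
      rw [Finset.sum_eq_single_of_mem m (Finset.self_mem_range_succ m)]
      · rw [show 0 + (2*m+1) - 2*m = 1 from by omega, smallBeta_one]
      · intro i hi hne
        have hi' : i < m := by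
          have := Finset.mem_range.mp hi; omega
        rw [show 0 + (2*m+1) - 2*i = 2*(m-i)+1 from by omega,
          smallBeta_odd ⟨m-i, by ring⟩ (by omega)]
        simp
    rw [hsum, show ((-1:ℚ)) ^ (2*m+1) = -1 from by rw [pow_succ, pow_mul]; norm_num, hfs2]
    have h2m1 : (2*(m:ℚ)+1) ≠ 0 := by positivity
    have hb : (((2*m).factorial : ℚ)) ≠ 0 := by exact_mod_cast (2*m).factorial_ne_zero
    rw [show 2*m+1-1 = 2*m from by omega]
    field_simp
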